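/- Let m ∉ {1, −3}, K ∈ ℝ, let I ⊆ ℝ be an open interval, and let ζ, X : I → ℝ be functions with ζ twice differentiable, X differentiable, and ζ(s) ≠ 0 for all s ∈ I, satisfying on I: (m+1)ζ' + (m+3)ζ² + 2X + K = 0, X' = −2ζX, and ζ'' = −4ζζ' + 2ζX. Then X = ζ' on I and ζ' + ζ² + K/(m+3) = 0 on I. -/

import Mathlib

/-- Let m ∉ {1, −3}, K ∈ ℝ, let I ⊆ ℝ be an open interval, and let
ζ, X : I → ℝ be functions with ζ twice differentiable, X differentiable, and
ζ(s) ≠ 0 for all s ∈ I, satisfying on I: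
(m+1)ζ' + (m+3)ζ² + 2X + K = 0, X' = −2ζX, and ζ'' = −4ζζ' + 2ζX.
Then X = ζ' on I and ζ' + ζ² + K/(m+3) = 0 on I. -/
theorem stmt_17 (m K : ℝ) (hm1 : m ≠ 1) (hm3 : m ≠ -3)
    (I : Set ℝ) (hI : IsOpen I) (hIc : I.OrdConnected)
    (ζ X : ℝ → ℝ)
    (hζ1 : ∀ s ∈ I, DifferentiableAt ℝ ζ s)
    (hζ2 : ∀ s ∈ I, DifferentiableAt ℝ (deriv ζ) s)
    (hXd : ∀ s ∈ I, DifferentiableAt ℝ X s)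
    (hζ0 : ∀ s ∈ I, ζ s ≠ 0)
    (hE1 : ∀ s ∈ I, (m + 1) * deriv ζ s + (m + 3) * (ζ s) ^ 2 + 2 * X s + K = 0)
    (hEX : ∀ s ∈ I, deriv X s = -2 * ζ s * X s)
    (hE4 : ∀ s ∈ I, deriv (deriv ζ) s = -4 * ζ s * deriv ζ s + 2 * ζ s * X s) :
    ∀ s ∈ I, X s = deriv ζ s ∧ deriv ζ s + (ζ s) ^ 2 + K / (m + 3) = 0 := by
  intro s hs
  set F : ℝ → ℝ := fun t => (m + 1) * deriv ζ t + (m + 3) * (ζ t) ^ 2 + 2 * X t + K with hF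
  have hFeq : F =ᶠ[nhds s] (fun _ => 0) :=
    Filter.eventuallyEq_of_mem (hI.mem_nhds hs) hE1
  have hderiv0 : deriv F s = 0 := by
    rw [hFeq.deriv_eq, deriv_const]
  have hda : HasDerivAt F
      ((m + 1) * deriv (deriv ζ) s + (m + 3) * (2 * ζ s * deriv ζ s) + 2 * deriv X s) s := by
    have h1 := (hζ2 s hs).hasDerivAt
    have h2 := (hζ1 s hs).hasDerivAt
    have h3 := (hXd s hs).hasDerivAt
    have := ((h1.const_mul (m + 1)).add ((h2.pow 2).const_mul (m + 3))).add
      (h3.const_mul 2)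
    have := this.add_const K
    exact this.congr_deriv (by ring)
  have hD : (m + 1) * deriv (deriv ζ) s + (m + 3) * (2 * ζ s * deriv ζ s) + 2 * deriv X s = 0 := by
    rw [← hda.deriv]; exact hderiv0
  rw [hE4 s hs, hEX s hs] at hD
  -- hD : ζ s * ((2 - 2*m) * deriv ζ s + (2*m - 2) * X s) = 0 after factoring
  have hkey : (2 * m - 2) * (X s - deriv ζ s) = 0 := by
    have hz := hζ0 s hs
    have : ζ s * ((2 * m - 2) * (X s - deriv ζ s)) = 0 := by ring_nf; ring_nf at hD; linarith
    exact (mul_eq_zero.mp this).resolve_left hz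
  have hm1' : 2 * m - 2 ≠ 0 := by
    intro h; apply hm1; linarith
  have hXz : X s = deriv ζ s := by
    have := (mul_eq_zero.mp hkey).resolve_left hm1'
    linarith
  refine ⟨hXz, ?_⟩
  have hE := hE1 s hs
  rw [hXz] at hE
  have hm3' : m + 3 ≠ 0 := by intro h; apply hm3; linarith
  field_simp
  linarith
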